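/- Cooley–Tukey decomposition (odd part): under the same setup, for every natural number k, P_{k+M} = E_k − ω_N^k O_k. -/

import Mathlib

open Complex Finset

lemma sum_range_even_odd' {β : Type*} [AddCommMonoid β] (f : ℕ → β) (M : ℕ) :
    ∑ j ∈ Finset.range (2 * M), f j =
      ∑ j ∈ Finset.range M, f (2 * j) + ∑ j ∈ Finset.range M, f (2 * j + 1) := by
  induction M with
  | zero => simp
  | succ n ih =>
    rw [show 2 * (n + 1) = 2 * n + 1 + 1 from by ring, Finset.sum_range_succ,
      Finset.sum_range_succ, ih, Finset.sum_range_succ, Finset.sum_range_succ]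
    abel

theorem cooley_tukey_odd (M : ℕ) (hM : 0 < M) (p : Fin (2 * M) → ℂ)
    (ωN ωM : ℂ)
    (hωN : ωN = Complex.exp (2 * Real.pi * Complex.I / ((2 * M : ℕ) : ℂ)))
    (hωM : ωM = Complex.exp (2 * Real.pi * Complex.I / (M : ℂ)))
    (k : ℕ) :
    ∑ j : Fin (2 * M), p j * ωN ^ ((j : ℕ) * (k + M)) =
      (∑ j : Fin M, p ⟨2 * (j : ℕ), by have := j.isLt; omega⟩ * ωM ^ ((j : ℕ) * k)) -
        ωN ^ k * ∑ j : Fin M, p ⟨2 * (j : ℕ) + 1, by have := j.isLt; omega⟩ * ωM ^ ((j : ℕ) * k) := by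
  have hMne : (M : ℂ) ≠ 0 := Nat.cast_ne_zero.mpr hM.ne'
  have h2 : ωN ^ 2 = ωM := by
    rw [hωN, hωM, ← Complex.exp_nat_mul]
    congr 1
    push_cast
    field_simp
  have hNM : ωN ^ M = -1 := by
    rw [hωN, ← Complex.exp_nat_mul]
    have harg : (M : ℂ) * (2 * Real.pi * Complex.I / ((2 * M : ℕ) : ℂ)) =
        Real.pi * Complex.I := by
      push_cast
      field_simp
    rw [harg, Complex.exp_pi_mul_I]
  have hMM : ωM ^ M = 1 := by
    rw [hωM, ← Complex.exp_nat_mul]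
    have harg : (M : ℂ) * (2 * Real.pi * Complex.I / (M : ℂ)) =
        2 * Real.pi * Complex.I := by field_simp
    rw [harg, Complex.exp_two_pi_mul_I]
  set f : ℕ → ℂ := fun n => (if h : n < 2 * M then p ⟨n, h⟩ else 0) * ωN ^ (n * (k + M))
    with hf
  have even_pow : ∀ j : ℕ, ωN ^ (2 * j * (k + M)) = ωM ^ (j * k) := by
    intro j
    have h : 2 * j * (k + M) = 2 * (j * k) + 2 * (j * M) := by ring
    have e1 : ωN ^ (2 * (j * k)) = ωM ^ (j * k) := by rw [pow_mul, h2]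
    have e2 : ωN ^ (2 * (j * M)) = 1 := by
      rw [pow_mul, h2, Nat.mul_comm, pow_mul, hMM, one_pow]
    rw [h, pow_add, e1, e2, mul_one]
  have odd_pow : ∀ j : ℕ, ωN ^ ((2 * j + 1) * (k + M)) = -(ωM ^ (j * k) * ωN ^ k) := by
    intro j
    have h : (2 * j + 1) * (k + M) = (2 * (j * k) + 2 * (j * M) + k) + M := by ring
    have e1 : ωN ^ (2 * (j * k)) = ωM ^ (j * k) := by rw [pow_mul, h2]
    have e2 : ωN ^ (2 * (j * M)) = 1 := by
      rw [pow_mul, h2, Nat.mul_comm, pow_mul, hMM, one_pow]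
    rw [h, pow_add, hNM, pow_add, pow_add, e1, e2]
    ring
  have hL : ∑ j : Fin (2 * M), p j * ωN ^ ((j : ℕ) * (k + M)) =
      ∑ j ∈ Finset.range (2 * M), f j := by
    rw [← Fin.sum_univ_eq_sum_range f (2 * M)]
    refine Finset.sum_congr rfl fun j _ => ?_
    simp [hf, j.isLt]
  rw [hL, sum_range_even_odd' f M]
  have hE : ∑ j ∈ Finset.range M, f (2 * j) =
      ∑ j : Fin M, p ⟨2 * (j : ℕ), by have := j.isLt; omega⟩ * ωM ^ ((j : ℕ) * k) := by
    rw [← Fin.sum_univ_eq_sum_range (fun j => f (2 * j)) M]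
    refine Finset.sum_congr rfl fun j _ => ?_
    have hj : 2 * (j : ℕ) < 2 * M := by have := j.isLt; omega
    simp only [hf, dif_pos hj, even_pow]
  have hO : ∑ j ∈ Finset.range M, f (2 * j + 1) =
      -(ωN ^ k * ∑ j : Fin M, p ⟨2 * (j : ℕ) + 1, by have := j.isLt; omega⟩ *
        ωM ^ ((j : ℕ) * k)) := by
    rw [Finset.mul_sum, ← Finset.sum_neg_distrib,
      ← Fin.sum_univ_eq_sum_range (fun j => f (2 * j + 1)) M]
    refine Finset.sum_congr rfl fun j _ => ?_
    have hj : 2 * (j : ℕ) + 1 < 2 * M := by have := j.isLt; omega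
    simp only [hf, dif_pos hj, odd_pow]
    ring
  rw [hE, hO]
  ring
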